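/- The Neumann series Σ_{k=0}^∞ Ā^k converges (in the normed algebra of n×n real matrices), and the inverse of A admits the representation A⁻¹ = D⁻¹ · Σ_{k=0}^∞ Ā^k; in particular A⁻¹ = D⁻¹ · (I − Ā)⁻¹. -/

import Mathlib

open Matrix Finset

section Core

attribute [local instance] Matrix.linftyOpNormedRing Matrix.linftyOpNormedAlgebra

/-- Core geometric-series lemma, with the `L∞`-operator norm locally installed. -/
private lemma neumann_core {n : ℕ} (B : Matrix (Fin n) (Fin n) ℝ)
    (h : ∀ i, ∑ j, |B i j| < 1) :
    Summable (fun k : ℕ => B ^ k) ∧ (∑' k : ℕ, B ^ k) = (1 - B)⁻¹ := by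
  haveI : CompleteSpace (Matrix (Fin n) (Fin n) ℝ) := FiniteDimensional.complete ℝ _
  have hB : ‖B‖ < 1 := by
    rw [Matrix.linfty_opNorm_def]
    have : ((Finset.univ : Finset (Fin n)).sup fun i : Fin n => ∑ j, ‖B i j‖₊) < 1 := by
      refine Finset.sup_lt_iff (by norm_num : (0 : NNReal) < 1) |>.2 fun i _ => ?_
      have hcoe : ((∑ j, ‖B i j‖₊ : NNReal) : ℝ) = ∑ j, |B i j| := by
        push_cast
        simp [Real.norm_eq_abs]
      rw [← NNReal.coe_lt_coe, hcoe, NNReal.coe_one]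
      exact h i
    exact_mod_cast this
  refine ⟨summable_geometric_of_norm_lt_one hB, ?_⟩
  rw [Matrix.nonsing_inv_eq_ringInverse]
  exact geom_series_eq_inverse B hB

end Core

/-- Same statement, elaborated with the default (entrywise/pi) topology on matrices. -/
private lemma neumann_aux {n : ℕ} (B : Matrix (Fin n) (Fin n) ℝ)
    (h : ∀ i, ∑ j, |B i j| < 1) :
    Summable (fun k : ℕ => B ^ k) ∧ (∑' k : ℕ, B ^ k) = (1 - B)⁻¹ :=
  neumann_core B h

/-- Let `A` be an `n × n` real matrix (`n ≥ 1`) with nonpositive off-diagonal entries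
whose diagonal entries satisfy `A i i = 1 - ∑_{j ≠ i} A j i`.  With
`D = diag(A 1 1, …, A n n)` and `Ā = (D - A) * D⁻¹`, the Neumann series `∑ₖ Āᵏ`
converges, and `A⁻¹ = D⁻¹ * ∑ₖ Āᵏ`; in particular `A⁻¹ = D⁻¹ * (I - Ā)⁻¹`. -/
theorem matrix_column_stochastic_M_matrix_neumann_series
    (n : ℕ) (hn : 1 ≤ n) (A : Matrix (Fin n) (Fin n) ℝ)
    (hoff : ∀ i j, i ≠ j → A i j ≤ 0)
    (hdiag : ∀ i, A i i = 1 - ∑ j ∈ Finset.univ.erase i, A j i)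
    (D : Matrix (Fin n) (Fin n) ℝ) (hD : D = Matrix.diagonal fun i => A i i)
    (Abar : Matrix (Fin n) (Fin n) ℝ) (hAbar : Abar = (D - A) * D⁻¹) :
    Summable (fun k : ℕ => Abar ^ k) ∧
      A⁻¹ = D⁻¹ * (∑' k : ℕ, Abar ^ k) ∧
      A⁻¹ = D⁻¹ * (1 - Abar)⁻¹ := by
  have hA1 : ∀ i, 1 ≤ A i i := by
    intro i
    have hsum : ∑ j ∈ Finset.univ.erase i, A j i ≤ 0 :=
      Finset.sum_nonpos fun j hj => hoff j i (Finset.ne_of_mem_erase hj)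
    rw [hdiag i]; linarith
  have hApos : ∀ i, (0 : ℝ) < A i i := fun i => lt_of_lt_of_le one_pos (hA1 i)
  have hDinv : D⁻¹ = Matrix.diagonal fun i => (A i i)⁻¹ := by
    apply Matrix.inv_eq_right_inv
    have hone : (fun i => A i i * (A i i)⁻¹) = fun _ => (1 : ℝ) :=
      funext fun i => mul_inv_cancel₀ (ne_of_gt (hApos i))
    rw [hD, Matrix.diagonal_mul_diagonal, hone, Matrix.diagonal_one]
  have hAbar_apply : ∀ i j, Abar i j = (D - A) i j * (A j j)⁻¹ := by
    intro i j
    rw [hAbar, hDinv, Matrix.mul_diagonal]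
  have hDA : ∀ i j, (D - A) i j = if i = j then 0 else -A i j := by
    intro i j
    by_cases h : i = j
    · subst h; simp [hD]
    · simp [hD, Matrix.sub_apply, Matrix.diagonal_apply_ne _ h, h]
  -- column sums (= row sums of the transpose) are < 1
  have hcol : ∀ i, ∑ j, |Abarᵀ i j| < 1 := by
    intro i
    have habs : ∀ j, |Abarᵀ i j| = (if j = i then 0 else -A j i) * (A i i)⁻¹ := by
      intro j
      rw [Matrix.transpose_apply, hAbar_apply, hDA]
      by_cases h : j = i
      · simp [h]
      · rw [if_neg h, abs_mul, abs_of_nonneg (neg_nonneg.2 (hoff j i h)),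
          abs_of_nonneg (inv_nonneg.2 (hApos i).le)]
    have hsum1 : ∑ j, (if j = i then (0:ℝ) else -A j i) = A i i - 1 := by
      have h1 : ∑ j ∈ Finset.univ.erase i, (if j = i then (0:ℝ) else -A j i) + 
          (if i = i then (0:ℝ) else -A i i) = ∑ j, (if j = i then (0:ℝ) else -A j i) :=
        Finset.sum_erase_add _ _ (Finset.mem_univ i)
      have h2 : ∑ j ∈ Finset.univ.erase i, (if j = i then (0:ℝ) else -A j i) = 
          ∑ j ∈ Finset.univ.erase i, -A j i :=
        Finset.sum_congr rfl fun j hj => if_neg (Finset.ne_of_mem_erase hj)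
      rw [← h1, h2, if_pos rfl, add_zero, Finset.sum_neg_distrib]
      have := hdiag i
      linarith
    calc ∑ j, |Abarᵀ i j| = ∑ j, (if j = i then (0:ℝ) else -A j i) * (A i i)⁻¹ :=
          Finset.sum_congr rfl fun j _ => habs j
      _ = (A i i - 1) * (A i i)⁻¹ := by rw [← Finset.sum_mul, hsum1]
      _ = 1 - (A i i)⁻¹ := by rw [sub_mul, mul_inv_cancel₀ (ne_of_gt (hApos i)), one_mul]
      _ < 1 := by
          have : (0:ℝ) < (A i i)⁻¹ := inv_pos.2 (hApos i)
          linarith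
  obtain ⟨hs, hts⟩ := neumann_aux Abarᵀ hcol
  have hpow : ∀ k : ℕ, (Abarᵀ ^ k)ᵀ = Abar ^ k := fun k => by
    rw [← Matrix.transpose_pow, Matrix.transpose_transpose]
  have hsum : Summable (fun k : ℕ => Abar ^ k) := by
    simpa only [hpow] using hs.matrix_transpose
  have hts2 : (∑' k : ℕ, Abar ^ k) = (1 - Abar)⁻¹ := by
    have h1 : (∑' k : ℕ, Abar ^ k) = (∑' k : ℕ, Abarᵀ ^ k)ᵀ := by
      rw [Matrix.transpose_tsum]
      exact tsum_congr fun k => (hpow k).symm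
    rw [h1, hts, Matrix.transpose_nonsing_inv]
    congr 1
    simp [Matrix.transpose_sub]
  have hDdet : IsUnit D.det := by
    rw [hD, Matrix.det_diagonal]
    exact isUnit_iff_ne_zero.2 (Finset.prod_ne_zero_iff.2 fun i _ => ne_of_gt (hApos i))
  have hA_eq : A = (1 - Abar) * D := by
    rw [hAbar, Matrix.sub_mul, Matrix.one_mul, Matrix.mul_assoc,
      Matrix.nonsing_inv_mul D hDdet, Matrix.mul_one, sub_sub_cancel]
  have hAinv : A⁻¹ = D⁻¹ * (1 - Abar)⁻¹ := by
    rw [hA_eq, Matrix.mul_inv_rev]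
  exact ⟨hsum, by rw [hts2]; exact hAinv, hAinv⟩
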